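/- arXiv:1905.06485 — 4 statements merged into one kernel-verified Lean document; each statement's English description precedes it below -/
import Mathlib

section
/- Quadratic perturbation preserves supersolutions: Let d ≥ 1 be an integer, c > 0, and let u₂ be a viscosity supersolution of min{−(1/2)Δu + c, u − g} = 0 on ℝ^d. Then for every ε ∈ (0, 1/d), the function u₂^ε(x) := (1 − dε)·u₂(x) + cε·(Σᵢ₌₁^d xᵢ² + d³/(4c²)) is also a viscosity supersolution of min{−(1/2)Δu + c, u − g} = 0 on ℝ^d; in particular u₂^ε ≥ g on ℝ^d. -/
open Filter MeasureTheory

noncomputable def lap {d : ℕ} (φ : EuclideanSpace ℝ (Fin d) → ℝ)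
    (x : EuclideanSpace ℝ (Fin d)) : ℝ :=
  ∑ i : Fin d, iteratedFDeriv ℝ 2 φ x ![EuclideanSpace.single i 1, EuclideanSpace.single i 1]

noncomputable def gObst {d : ℕ} (x : EuclideanSpace ℝ (Fin d)) : ℝ :=
  max (⨆ i, x i) 0

def IsVSubsol {d : ℕ} (c : ℝ) (ψ : EuclideanSpace ℝ (Fin d) → ℝ)
    (Ω : Set (EuclideanSpace ℝ (Fin d))) (u : EuclideanSpace ℝ (Fin d) → ℝ) : Prop :=
  ∀ x₀ ∈ Ω, ψ x₀ < u x₀ →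
    ∀ φ : EuclideanSpace ℝ (Fin d) → ℝ, ContDiff ℝ 2 φ → φ x₀ = u x₀ →
      (∀ᶠ x in nhds x₀, u x ≤ φ x) → -(1 / 2 : ℝ) * lap φ x₀ + c ≤ 0

def IsVSupersol {d : ℕ} (c : ℝ) (ψ : EuclideanSpace ℝ (Fin d) → ℝ)
    (Ω : Set (EuclideanSpace ℝ (Fin d))) (u : EuclideanSpace ℝ (Fin d) → ℝ) : Prop :=
  (∀ x ∈ Ω, ψ x ≤ u x) ∧
  ∀ x₀ ∈ Ω, ∀ φ : EuclideanSpace ℝ (Fin d) → ℝ, ContDiff ℝ 2 φ → φ x₀ = u x₀ →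
    (∀ᶠ x in nhds x₀, φ x ≤ u x) → 0 ≤ -(1 / 2 : ℝ) * lap φ x₀ + c

def IsVSol {d : ℕ} (c : ℝ) (ψ : EuclideanSpace ℝ (Fin d) → ℝ)
    (Ω : Set (EuclideanSpace ℝ (Fin d))) (u : EuclideanSpace ℝ (Fin d) → ℝ) : Prop :=
  IsVSubsol c ψ Ω u ∧ IsVSupersol c ψ Ω u

def LinGrowth {d : ℕ} (ψ u : EuclideanSpace ℝ (Fin d) → ℝ) : Prop :=
  (∀ x, ψ x ≤ u x) ∧ ∃ C : ℝ, ∀ x, u x ≤ (∑ i, |x i|) + C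

lemma lap_q {d : ℕ} (K : ℝ) (x : EuclideanSpace ℝ (Fin d)) (i : Fin d) :
    iteratedFDeriv ℝ 2 (fun y : EuclideanSpace ℝ (Fin d) => ‖y‖^2 + K) x
      ![EuclideanSpace.single i 1, EuclideanSpace.single i 1] = 2 := by
  rw [iteratedFDeriv_two_apply]
  have h1 : fderiv ℝ (fun y : EuclideanSpace ℝ (Fin d) => ‖y‖^2 + K)
      = fun y => ((2:ℕ) • innerSL ℝ) y := by
    funext y
    rw [fderiv_add_const]
    exact (hasStrictFDerivAt_norm_sq y).hasFDerivAt.fderiv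
  rw [h1, ContinuousLinearMap.fderiv]
  simp [EuclideanSpace.inner_single_left]
  rw [innerSL_apply_apply]; simp

lemma lap_comb {d : ℕ} (f : EuclideanSpace ℝ (Fin d) → ℝ) (hf : ContDiff ℝ 2 f)
    (a b K : ℝ) (x : EuclideanSpace ℝ (Fin d)) :
    lap (fun y => a * f y + b * (‖y‖^2 + K)) x = a * lap f x + b * (2 * d) := by
  have hq : ContDiff ℝ 2 (fun y : EuclideanSpace ℝ (Fin d) => ‖y‖^2 + K) :=
    (contDiff_norm_sq ℝ).add contDiff_const
  unfold lap
  have hrw : (fun y : EuclideanSpace ℝ (Fin d) => a * f y + b * (‖y‖^2 + K))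
      = fun y => (a • f y) + (b • (‖y‖^2 + K)) := by
    funext y; simp [smul_eq_mul]
  rw [hrw]
  have hsum : ∀ i : Fin d,
      iteratedFDeriv ℝ 2 (fun y : EuclideanSpace ℝ (Fin d) => (a • f y) + (b • (‖y‖^2 + K))) x
        ![EuclideanSpace.single i 1, EuclideanSpace.single i 1]
      = a * iteratedFDeriv ℝ 2 f x ![EuclideanSpace.single i 1, EuclideanSpace.single i 1]
        + b * 2 := by
    intro i
    rw [iteratedFDeriv_add_apply' (hf.const_smul a).contDiffAt (hq.const_smul b).contDiffAt,
      iteratedFDeriv_const_smul_apply' hf.contDiffAt, iteratedFDeriv_const_smul_apply' hq.contDiffAt]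
    simp [lap_q K x i]
  rw [Finset.sum_congr rfl (fun i _ => hsum i), Finset.sum_add_distrib, ← Finset.mul_sum]
  simp [Finset.sum_const]
  ring

lemma sumsq_eq_normsq {d : ℕ} (x : EuclideanSpace ℝ (Fin d)) : ∑ i, (x i)^2 = ‖x‖^2 := by
  rw [EuclideanSpace.norm_eq, Real.sq_sqrt (Finset.sum_nonneg fun i _ => sq_nonneg _)]
  simp

/-- Quadratic perturbation preserves supersolutions. -/
theorem quadratic_perturbation_supersolution (d : ℕ) (hd : 1 ≤ d) (c : ℝ) (hc : 0 < c)
    (u₂ : EuclideanSpace ℝ (Fin d) → ℝ) (hu₂cont : Continuous u₂)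
    (hu₂ : IsVSupersol c gObst Set.univ u₂)
    (ε : ℝ) (hε : ε ∈ Set.Ioo 0 (1 / (d : ℝ))) :
    IsVSupersol c gObst Set.univ
        (fun x => (1 - d * ε) * u₂ x + c * ε * ((∑ i, (x i) ^ 2) + (d : ℝ) ^ 3 / (4 * c ^ 2))) ∧
      ∀ x : EuclideanSpace ℝ (Fin d),
        gObst x ≤ (1 - d * ε) * u₂ x + c * ε * ((∑ i, (x i) ^ 2) + (d : ℝ) ^ 3 / (4 * c ^ 2)) := by
  obtain ⟨hε0, hεd⟩ := hε
  have hd1 : (1:ℝ) ≤ d := by exact_mod_cast hd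
  have hd0 : (0:ℝ) < d := by linarith
  have hdε : (d:ℝ) * ε < 1 := by
    have := (lt_div_iff₀ hd0).mp hεd  -- hεd : ε < 1/d ; this : ε * d < 1
    linarith
  set A : ℝ := 1 - d * ε with hA
  have hA0 : 0 < A := by simp only [hA]; linarith
  set K : ℝ := (d:ℝ)^3 / (4 * c^2) with hK
  -- key pointwise inequality
  have hkey : ∀ x : EuclideanSpace ℝ (Fin d),
      gObst x ≤ A * u₂ x + c * ε * ((∑ i, (x i)^2) + K) := by
    intro x
    have hS : (0:ℝ) ≤ ∑ i, (x i)^2 := Finset.sum_nonneg fun i _ => sq_nonneg _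
    have hg0 : 0 ≤ gObst x := le_max_right _ _
    have hu : gObst x ≤ u₂ x := hu₂.1 x (Set.mem_univ x)
    have hAg : A * gObst x ≤ A * u₂ x :=
      mul_le_mul_of_nonneg_left hu hA0.le
    -- it suffices: d * ε * gObst x ≤ c * ε * ((∑ i, x i ^2) + K)
    have hmain : (d:ℝ) * gObst x ≤ c * (∑ i, (x i)^2) + c * K := by
      have hcK : c * K = (d:ℝ)^3 / (4 * c) := by
        rw [hK]; field_simp
      rw [hcK]
      haveI : Nonempty (Fin d) := Fin.pos_iff_nonempty.mp hd
      obtain ⟨j, hj⟩ := exists_eq_ciSup_of_finite (f := fun i => x i)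
      have hsup : gObst x = max (x j) 0 := by rw [gObst, hj]
      rw [hsup]
      rcases le_total (x j) 0 with h | h
      · rw [max_eq_right h]
        have : (0:ℝ) ≤ (d:ℝ)^3 / (4*c) := by positivity
        nlinarith
      · rw [max_eq_left h]
        have hxj : (x j)^2 ≤ ∑ i, (x i)^2 :=
          Finset.single_le_sum (fun i _ => sq_nonneg (x i)) (Finset.mem_univ j)
        have h4c : 4 * c * ((d:ℝ)^3 / (4*c)) = (d:ℝ)^3 := by field_simp
        nlinarith [sq_nonneg (2 * c * x j - d), sq_nonneg ((d:ℝ) - 1), hd1, hc]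
    have : (d:ℝ) * ε * gObst x ≤ c * ε * ((∑ i, (x i)^2) + K) := by
      have := mul_le_mul_of_nonneg_left hmain hε0.le
      nlinarith
    calc gObst x = A * gObst x + d * ε * gObst x := by rw [hA]; ring
      _ ≤ A * u₂ x + c * ε * ((∑ i, (x i)^2) + K) := add_le_add hAg this
  refine ⟨⟨fun x _ => hkey x, ?_⟩, hkey⟩
  -- supersolution test-function property
  intro x₀ _ φ hφ hφx₀ hφle
  have hsum : ∀ x : EuclideanSpace ℝ (Fin d), (∑ i, (x i)^2) + K = ‖x‖^2 + K := by
    intro x; rw [sumsq_eq_normsq]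
  set ψ : EuclideanSpace ℝ (Fin d) → ℝ :=
    fun x => (φ x - c * ε * (‖x‖^2 + K)) / A with hψ
  have hψC2 : ContDiff ℝ 2 ψ := by
    apply ContDiff.div_const
    exact hφ.sub (contDiff_const.mul ((contDiff_norm_sq ℝ).add contDiff_const))
  have hψx₀ : ψ x₀ = u₂ x₀ := by
    have h1 : φ x₀ = A * u₂ x₀ + c * ε * (‖x₀‖^2 + K) := by
      rw [hφx₀]; rw [← hsum x₀]
    rw [hψ]
    simp only [h1]
    field_simp
    ring
  have hψle : ∀ᶠ x in nhds x₀, ψ x ≤ u₂ x := by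
    filter_upwards [hφle] with x hx
    have hx' : φ x ≤ A * u₂ x + c * ε * (‖x‖^2 + K) := by
      rw [← hsum x]; exact hx
    rw [hψ, div_le_iff₀ hA0]
    nlinarith
  have h0 := hu₂.2 x₀ (Set.mem_univ x₀) ψ hψC2 hψx₀ hψle
  -- express φ in terms of ψ
  have hφeq : φ = fun x => A * ψ x + (c * ε) * (‖x‖^2 + K) := by
    funext x
    rw [hψ]
    field_simp
    ring
  have hlap : lap φ x₀ = A * lap ψ x₀ + (c * ε) * (2 * d) := by
    rw [hφeq]; exact lap_comb ψ hψC2 A (c*ε) K x₀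
  rw [hlap]
  have : -(1/2 : ℝ) * (A * lap ψ x₀ + (c*ε) * (2*d)) + c
      = A * (-(1/2 : ℝ) * lap ψ x₀ + c) := by
    rw [hA]; ring
  rw [this]
  exact mul_nonneg hA0.le h0
end

section
/- Rescaling produces a subsolution: Let d ≥ 1 be an integer, c > 0, and let u be a viscosity solution of min{−(1/2)Δu + c, u − g} = 0 on ℝ^d. Then for every t ≥ 1, the function v(x) := u(tx)/t is a viscosity subsolution of min{−(1/2)Δv + c, v − g} = 0 on ℝ^d. -/
open Filter MeasureTheory

lemma gObst_smul {d : ℕ} (hd : 1 ≤ d) (t : ℝ) (ht : 0 < t) (x : EuclideanSpace ℝ (Fin d)) :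
    gObst (t • x) = t * gObst x := by
  have : Nonempty (Fin d) := ⟨⟨0, hd⟩⟩
  unfold gObst
  have h1 : (⨆ i, (t • x) i) = t * ⨆ i, x i := by
    rw [Real.mul_iSup_of_nonneg ht.le]
    exact iSup_congr fun i => by simp [smul_eq_mul]
  rw [h1, mul_max_of_nonneg _ _ ht.le, mul_zero]


/-- Rescaling produces a subsolution. -/
theorem rescaling_subsolution (d : ℕ) (hd : 1 ≤ d) (c : ℝ) (hc : 0 < c)
    (u : EuclideanSpace ℝ (Fin d) → ℝ) (hucont : Continuous u)
    (hu : IsVSol c gObst Set.univ u) (t : ℝ) (ht : 1 ≤ t) :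
    IsVSubsol c gObst Set.univ (fun x => u (t • x) / t) := by
  have ht0 : 0 < t := lt_of_lt_of_le one_pos ht
  intro x₀ _ hgx φ hφ hφx hle
  set L : EuclideanSpace ℝ (Fin d) →L[ℝ] EuclideanSpace ℝ (Fin d) :=
    (t⁻¹ : ℝ) • ContinuousLinearMap.id ℝ (EuclideanSpace ℝ (Fin d)) with hL
  set ψ : EuclideanSpace ℝ (Fin d) → ℝ := fun y => t • (φ ∘ L) y with hψ
  have hφL : ContDiff ℝ 2 (φ ∘ L) := hφ.comp L.contDiff
  have hψC : ContDiff ℝ 2 ψ := hφL.const_smul t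
  have hinv : L (t • x₀) = x₀ := by
    simp [hL, smul_smul, inv_mul_cancel₀ ht0.ne', mul_inv_cancel₀ ht0.ne']
  have heq : ψ (t • x₀) = u (t • x₀) := by
    simp only [hψ, Function.comp_apply, hinv, smul_eq_mul, hφx]
    field_simp
  have hg : gObst (t • x₀) < u (t • x₀) := by
    rw [gObst_smul hd t ht0]
    have h := (mul_lt_mul_iff_right₀ ht0).2 hgx
    simpa [mul_div_cancel₀ _ ht0.ne'] using h
  have hev : ∀ᶠ y in nhds (t • x₀), u y ≤ ψ y := by
    have htend : Tendsto (fun y => L y) (nhds (t • x₀)) (nhds x₀) := by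
      have := L.continuous.tendsto (t • x₀); rwa [hinv] at this
    filter_upwards [htend.eventually hle] with y hy
    have h2 : t • L y = y := by
      simp [hL, smul_smul, mul_inv_cancel₀ ht0.ne']
    have h3 : u (t • L y) / t ≤ φ (L y) := hy
    rw [h2] at h3
    have h4 := (mul_le_mul_iff_right₀ ht0).2 h3
    rw [mul_div_cancel₀ _ ht0.ne'] at h4
    simpa [hψ, smul_eq_mul] using h4
  have key := hu.1 (t • x₀) (Set.mem_univ _) hg ψ hψC heq hev
  have hlap : lap ψ (t • x₀) = t⁻¹ * lap φ x₀ := by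
    unfold lap
    rw [Finset.mul_sum]
    refine Finset.sum_congr rfl fun i _ => ?_
    have h1 : iteratedFDeriv ℝ 2 ψ (t • x₀)
        = t • iteratedFDeriv ℝ 2 (φ ∘ L) (t • x₀) :=
      iteratedFDeriv_const_smul_apply' hφL.contDiffAt
    rw [h1, ContinuousMultilinearMap.smul_apply,
      L.iteratedFDeriv_comp_right hφ (t • x₀) (le_refl 2), hinv,
      ContinuousMultilinearMap.compContinuousLinearMap_apply]
    have h2 : (fun j => L (![EuclideanSpace.single i (1:ℝ), EuclideanSpace.single i 1] j))
        = fun j => (t⁻¹ : ℝ) • (![EuclideanSpace.single i (1:ℝ), EuclideanSpace.single i 1] j) := by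
      ext j : 1
      simp [hL]
    rw [h2, (iteratedFDeriv ℝ 2 φ x₀).map_smul_univ (fun _ => (t⁻¹:ℝ))
      ![EuclideanSpace.single i 1, EuclideanSpace.single i 1]]
    simp only [smul_eq_mul, Finset.prod_const, Finset.card_univ, Fintype.card_fin]
    field_simp
  rw [hlap] at key
  have h5 : 2 * c ≤ t⁻¹ * lap φ x₀ := by linarith
  have h6 : 0 ≤ t⁻¹ * lap φ x₀ := le_trans (by positivity) h5
  have h7 : lap φ x₀ = t * (t⁻¹ * lap φ x₀) := by field_simp
  have h8 : 1 * (t⁻¹ * lap φ x₀) ≤ t * (t⁻¹ * lap φ x₀) :=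
    mul_le_mul_of_nonneg_right ht h6
  rw [one_mul] at h8
  linarith
end

section
/- Explicit solution of the two-dimensional auxiliary obstacle problem: Let c > 0. The function η_c : ℝ² → ℝ is continuously differentiable on ℝ² and is a viscosity solution of min{−(1/2)Δη + c, η − ρ} = 0 on ℝ², where ρ(t, s) = (t + |s|)/√2. -/
open Filter MeasureTheory

noncomputable def eta (θ : ℝ) (x : EuclideanSpace ℝ (Fin 2)) : ℝ :=
  if |x 1| ≤ 1 / (2 * Real.sqrt 2 * θ) then
    x 0 / Real.sqrt 2 + θ * (x 1) ^ 2 + 1 / (8 * θ)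
  else (x 0 + |x 1|) / Real.sqrt 2

noncomputable def rhoObst2 (x : EuclideanSpace ℝ (Fin 2)) : ℝ :=
  (x 0 + |x 1|) / Real.sqrt 2

namespace EtaAux

abbrev E2 := EuclideanSpace ℝ (Fin 2)

lemma sqrt2_pos : (0:ℝ) < Real.sqrt 2 := Real.sqrt_pos.2 (by norm_num)
lemma sq_sqrt2 : Real.sqrt 2 ^ 2 = 2 := Real.sq_sqrt (by norm_num)

noncomputable def aa (c : ℝ) : ℝ := 1 / (2 * Real.sqrt 2 * c)

lemma aa_pos {c : ℝ} (hc : 0 < c) : 0 < aa c := by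
  unfold aa; positivity

lemma two_c_aa {c : ℝ} (hc : 0 < c) : 2 * c * aa c = (Real.sqrt 2)⁻¹ := by
  unfold aa
  have h := sqrt2_pos
  field_simp

lemma ca2 {c : ℝ} (hc : 0 < c) : c * (aa c)^2 = 1/(8*c) := by
  have haa2 : (2 * Real.sqrt 2 * c)^2 = 8*c^2 := by linear_combination 4*c^2*sq_sqrt2
  unfold aa
  rw [div_pow, one_pow, haa2]
  field_simp

lemma quad_ident {c : ℝ} (hc : 0 < c) (s : ℝ) :
    c * s^2 + 1/(8*c) - s / Real.sqrt 2 = c * (s - aa c)^2 := by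
  linear_combination s * two_c_aa hc - ca2 hc

lemma key_all {c : ℝ} (hc : 0 < c) (s : ℝ) :
    s / Real.sqrt 2 ≤ c * s^2 + 1/(8*c) := by
  have h1 := quad_ident hc s
  have h2 := mul_nonneg hc.le (sq_nonneg (s - aa c))
  linarith

lemma key_abs {c : ℝ} (hc : 0 < c) (s : ℝ) :
    |s| / Real.sqrt 2 ≤ c * s^2 + 1/(8*c) := by
  have := key_all hc |s|
  rwa [sq_abs] at this

lemma quad_at_aa {c : ℝ} (hc : 0 < c) : c * (aa c)^2 + 1/(8*c) = aa c / Real.sqrt 2 := by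
  have h1 := quad_ident hc (aa c)
  have : (aa c - aa c)^2 = 0 := by ring
  nlinarith [h1]

/-! ### The one-dimensional profile -/

noncomputable def psi (c : ℝ) (s : ℝ) : ℝ :=
  if |s| ≤ aa c then c * s^2 + 1/(8*c) else |s| / Real.sqrt 2

noncomputable def psid (c : ℝ) (s : ℝ) : ℝ :=
  max (-(Real.sqrt 2)⁻¹) (min (Real.sqrt 2)⁻¹ (2*c*s))

lemma continuous_psid (c : ℝ) : Continuous (psid c) :=
  continuous_const.max (continuous_const.min (by continuity))

lemma psi_eq_quad {c : ℝ} {s : ℝ} (h : |s| ≤ aa c) : psi c s = c * s^2 + 1/(8*c) :=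
  if_pos h

lemma hasDerivAt_quad (c : ℝ) (K : ℝ) (s : ℝ) :
    HasDerivAt (fun t : ℝ => c * t^2 + K) (2*c*s) s := by
  refine (((hasDerivAt_pow 2 s).const_mul c).add_const K).congr_deriv ?_
  push_cast; ring

lemma psi_eq_lin_pos {c : ℝ} (hc : 0 < c) {s : ℝ} (h : aa c ≤ s) :
    psi c s = s / Real.sqrt 2 := by
  have ha := aa_pos hc
  have hs : 0 < s := lt_of_lt_of_le ha h
  rcases eq_or_lt_of_le h with h' | h'
  · rw [psi_eq_quad (by rw [abs_of_pos hs, ← h'])]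
    rw [← h', quad_at_aa hc]
  · rw [psi, if_neg (by rw [abs_of_pos hs]; exact not_le.2 h'), abs_of_pos hs]

lemma psi_eq_lin_neg {c : ℝ} (hc : 0 < c) {s : ℝ} (h : s ≤ -aa c) :
    psi c s = -s / Real.sqrt 2 := by
  have ha := aa_pos hc
  have hs : s < 0 := lt_of_le_of_lt h (by linarith)
  rcases eq_or_lt_of_le h with h' | h'
  · rw [psi_eq_quad (by rw [abs_of_neg hs, h']; simp)]
    rw [h', neg_sq, neg_neg, quad_at_aa hc]
  · rw [psi, if_neg (by rw [abs_of_neg hs]; intro hh; linarith), abs_of_neg hs]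

lemma hasDerivAt_lin_pos (s : ℝ) :
    HasDerivAt (fun t : ℝ => t / Real.sqrt 2) ((Real.sqrt 2)⁻¹) s := by
  simpa [one_div] using (hasDerivAt_id s).div_const (Real.sqrt 2)

lemma hasDerivAt_lin_neg (s : ℝ) :
    HasDerivAt (fun t : ℝ => -t / Real.sqrt 2) (-(Real.sqrt 2)⁻¹) s := by
  simpa [one_div, neg_div] using ((hasDerivAt_id s).neg.div_const (Real.sqrt 2))

lemma hasDerivAt_psi {c : ℝ} (hc : 0 < c) (s : ℝ) :
    HasDerivAt (psi c) (psid c s) s := by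
  have ha := aa_pos hc
  have h2 := sqrt2_pos
  have hi2 : (0:ℝ) < (Real.sqrt 2)⁻¹ := inv_pos.2 h2
  have hca := two_c_aa hc
  rcases lt_trichotomy (|s|) (aa c) with h | h | h
  · -- interior: psi = quadratic locally
    have hev : (fun t => c * t^2 + 1/(8*c)) =ᶠ[nhds s] psi c := by
      have hopen : IsOpen {t : ℝ | |t| < aa c} := isOpen_lt continuous_abs continuous_const
      filter_upwards [hopen.mem_nhds h] with t ht
      exact (psi_eq_quad ht.le).symm
    have hD : HasDerivAt (psi c) (2*c*s) s :=
      (hasDerivAt_quad c _ s).congr_of_eventuallyEq hev.symm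
    convert hD using 1
    have hb : |2*c*s| ≤ (Real.sqrt 2)⁻¹ := by
      rw [abs_mul, abs_mul, abs_of_pos (by norm_num : (0:ℝ) < 2), abs_of_pos hc, ← hca]
      nlinarith
    obtain ⟨hb1, hb2⟩ := abs_le.1 hb
    rw [psid, min_eq_right hb2, max_eq_right hb1]
  · -- boundary
    rcases (abs_eq (le_of_lt ha)).1 h with hpos | hneg
    · subst hpos
      have hIic : HasDerivWithinAt (psi c) ((Real.sqrt 2)⁻¹) (Set.Iic (aa c)) (aa c) := by
        have h1 : HasDerivWithinAt (fun t : ℝ => c * t^2 + 1/(8*c)) ((Real.sqrt 2)⁻¹)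
            (Set.Iic (aa c)) (aa c) := by
          have := (hasDerivAt_quad c (1/(8*c)) (aa c)).hasDerivWithinAt (s := Set.Iic (aa c))
          rwa [hca] at this
        apply h1.congr_of_eventuallyEq ?_ (psi_eq_quad (by rw [abs_of_pos ha]))
        filter_upwards [self_mem_nhdsWithin, mem_nhdsWithin_of_mem_nhds
          ((isOpen_lt continuous_const continuous_id).mem_nhds
            (show -aa c < aa c by linarith))] with t ht1 ht2
        exact psi_eq_quad (abs_le.2 ⟨le_of_lt ht2, ht1⟩)
      have hIci : HasDerivWithinAt (psi c) ((Real.sqrt 2)⁻¹) (Set.Ici (aa c)) (aa c) := by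
        apply ((hasDerivAt_lin_pos (aa c)).hasDerivWithinAt).congr_of_eventuallyEq
          ?_ (psi_eq_lin_pos hc le_rfl)
        filter_upwards [self_mem_nhdsWithin] with t ht
        exact psi_eq_lin_pos hc ht
      have hu := hIic.union hIci
      rw [Set.Iic_union_Ici, hasDerivWithinAt_univ] at hu
      refine hu.congr_deriv ?_
      rw [psid, hca, min_self, max_eq_right (by linarith : -(Real.sqrt 2)⁻¹ ≤ (Real.sqrt 2)⁻¹)]
    · subst hneg  -- s = -aa c
      have hIic : HasDerivWithinAt (psi c) (-(Real.sqrt 2)⁻¹) (Set.Iic (-aa c)) (-aa c) := by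
        apply ((hasDerivAt_lin_neg (-aa c)).hasDerivWithinAt).congr_of_eventuallyEq
          ?_ (psi_eq_lin_neg hc le_rfl)
        filter_upwards [self_mem_nhdsWithin] with t ht
        exact psi_eq_lin_neg hc ht
      have hIci : HasDerivWithinAt (psi c) (-(Real.sqrt 2)⁻¹) (Set.Ici (-aa c)) (-aa c) := by
        have h1 : HasDerivWithinAt (fun t : ℝ => c * t^2 + 1/(8*c)) (-(Real.sqrt 2)⁻¹)
            (Set.Ici (-aa c)) (-aa c) := by
          have := (hasDerivAt_quad c (1/(8*c)) (-aa c)).hasDerivWithinAt (s := Set.Ici (-aa c))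
          have he : 2*c*(-aa c) = -(Real.sqrt 2)⁻¹ := by rw [← hca]; ring
          rwa [he] at this
        apply h1.congr_of_eventuallyEq ?_ (psi_eq_quad (by rw [abs_neg, abs_of_pos ha]))
        filter_upwards [self_mem_nhdsWithin, mem_nhdsWithin_of_mem_nhds
          ((isOpen_lt continuous_id continuous_const).mem_nhds
            (show -aa c < aa c by linarith))] with t ht1 ht2
        exact psi_eq_quad (abs_le.2 ⟨ht1, le_of_lt ht2⟩)
      have hu := hIic.union hIci
      rw [Set.Iic_union_Ici, hasDerivWithinAt_univ] at hu
      refine hu.congr_deriv ?_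
      have he : 2*c*(-aa c) = -(Real.sqrt 2)⁻¹ := by rw [← hca]; ring
      rw [psid, he, min_eq_right (by linarith), max_self]
  · -- outside
    rcases lt_or_ge 0 s with hs | hs
    · have hsa : aa c < s := by rwa [abs_of_pos hs] at h
      have hev : (fun t : ℝ => t / Real.sqrt 2) =ᶠ[nhds s] psi c := by
        filter_upwards [(isOpen_lt continuous_const continuous_id).mem_nhds hsa] with t ht
        exact (psi_eq_lin_pos hc (le_of_lt ht)).symm
      have hD : HasDerivAt (psi c) ((Real.sqrt 2)⁻¹) s :=
        (hasDerivAt_lin_pos s).congr_of_eventuallyEq hev.symm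
      convert hD using 1
      have hlt : (Real.sqrt 2)⁻¹ < 2*c*s := by rw [← hca]; nlinarith
      rw [psid, min_eq_left hlt.le, max_eq_right (by linarith)]
    · have hs' : s < 0 := by
        rcases hs.lt_or_eq with h' | h'
        · exact h'
        · rw [h'] at h; simp at h; linarith
      have hsa : s < -aa c := by rw [abs_of_neg hs'] at h; linarith
      have hev : (fun t : ℝ => -t / Real.sqrt 2) =ᶠ[nhds s] psi c := by
        filter_upwards [(isOpen_lt continuous_id continuous_const).mem_nhds hsa] with t ht
        exact (psi_eq_lin_neg hc (le_of_lt ht)).symm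
      have hD : HasDerivAt (psi c) (-(Real.sqrt 2)⁻¹) s :=
        (hasDerivAt_lin_neg s).congr_of_eventuallyEq hev.symm
      convert hD using 1
      have hlt : 2*c*s < -(Real.sqrt 2)⁻¹ := by rw [← hca]; nlinarith
      rw [psid, min_eq_right (by linarith), max_eq_left hlt.le]

lemma contDiff_psi {c : ℝ} (hc : 0 < c) : ContDiff ℝ 1 (psi c) := by
  rw [contDiff_one_iff_deriv]
  refine ⟨fun s => (hasDerivAt_psi hc s).differentiableAt, ?_⟩
  have : deriv (psi c) = psid c := funext fun s => (hasDerivAt_psi hc s).deriv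
  rw [this]; exact continuous_psid c

/-! ### Second-order comparison machinery -/

lemma second_deriv_nonneg {p : ℝ → ℝ} (hp : ContDiff ℝ 2 p) (hmin : IsLocalMin p 0) :
    0 ≤ deriv (deriv p) 0 := by
  by_contra hcon
  push_neg at hcon
  have h21 : (2 : WithTop ℕ∞) = 1 + 1 := by norm_num
  have hp' : ContDiff ℝ (1+1) p := by rwa [h21] at hp
  have hd1 : Differentiable ℝ p := hp.differentiable (by norm_num)
  have hC1 : ContDiff ℝ 1 (deriv p) := (contDiff_succ_iff_deriv.1 hp').2.2
  have hd2 : Differentiable ℝ (deriv p) := hC1.differentiable one_ne_zero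
  have h0 : deriv p 0 = 0 := hmin.deriv_eq_zero
  have hD : HasDerivAt (deriv p) (deriv (deriv p) 0) 0 := (hd2 0).hasDerivAt
  have hslope := hasDerivAt_iff_tendsto_slope.1 hD
  have hev : ∀ᶠ y in nhdsWithin 0 {(0:ℝ)}ᶜ, slope (deriv p) 0 y < 0 :=
    hslope.eventually (gt_mem_nhds hcon)
  have hev' : ∀ᶠ y in nhdsWithin (0:ℝ) (Set.Ioi 0), deriv p y < 0 := by
    have hmono : nhdsWithin (0:ℝ) (Set.Ioi 0) ≤ nhdsWithin 0 {(0:ℝ)}ᶜ :=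
      nhdsWithin_mono 0 (fun x hx => ne_of_gt hx)
    filter_upwards [hev.filter_mono hmono, self_mem_nhdsWithin] with y hy hy'
    rw [slope_def_field, h0, sub_zero, sub_zero] at hy
    have hy'' : (0:ℝ) < y := hy'
    exact (div_neg_iff.1 hy).elim (fun ⟨_, h⟩ => absurd hy'' (not_lt.2 h.le))
      (fun ⟨h, _⟩ => h)
  have hminev : ∀ᶠ y in nhdsWithin (0:ℝ) (Set.Ioi 0), p 0 ≤ p y :=
    mem_nhdsWithin_of_mem_nhds hmin
  obtain ⟨u, hu, hsub⟩ := mem_nhdsGT_iff_exists_Ioo_subset.1 (hev'.and hminev)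
  have hu0 : (0:ℝ) < u := hu
  have hanti : StrictAntiOn p (Set.Icc 0 (u/2)) := by
    apply strictAntiOn_of_deriv_neg (convex_Icc _ _) (hd1.continuous.continuousOn)
    intro x hx
    rw [interior_Icc] at hx
    exact (hsub ⟨hx.1, lt_of_lt_of_le hx.2 (by linarith)⟩).1
  have hlt : p (u/2) < p 0 :=
    hanti (Set.left_mem_Icc.2 (by linarith)) ⟨by linarith, le_rfl⟩ (by linarith)
  have hge : p 0 ≤ p (u/2) := (hsub ⟨by linarith, by linarith⟩).2
  linarith

lemma line_second {f : E2 → ℝ} (hf : ContDiff ℝ 2 f) (x e : E2) :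
    iteratedFDeriv ℝ 2 f x ![e, e] =
      deriv (deriv (fun r : ℝ => f (x + r • e))) 0 := by
  have hline : ∀ r : ℝ, HasDerivAt (fun r : ℝ => x + r • e) e r := by
    intro r
    simpa using ((hasDerivAt_id r).smul_const e).const_add x
  have hfd : Differentiable ℝ f := hf.differentiable two_ne_zero
  have hd1 : deriv (fun r : ℝ => f (x + r • e)) = fun r => fderiv ℝ f (x + r • e) e := by
    funext r
    exact ((hfd (x + r • e)).hasFDerivAt.comp_hasDerivAt r (hline r)).deriv
  rw [hd1]
  have hf1 : ContDiff ℝ 1 (fderiv ℝ f) := hf.fderiv_right le_rfl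
  have hF : HasFDerivAt (fderiv ℝ f) (fderiv ℝ (fderiv ℝ f) x) x :=
    ((hf1.differentiable one_ne_zero) x).hasFDerivAt
  have hF' : HasFDerivAt (fderiv ℝ f) (fderiv ℝ (fderiv ℝ f) x) (x + (0:ℝ) • e) := by
    rw [show x + (0:ℝ) • e = x by simp]; exact hF
  have hcomp : HasDerivAt (fun r : ℝ => fderiv ℝ f (x + r • e))
      (fderiv ℝ (fderiv ℝ f) x e) 0 :=
    hF'.comp_hasDerivAt 0 (hline 0)
  have happ : HasDerivAt (fun r : ℝ => fderiv ℝ f (x + r • e) e)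
      (fderiv ℝ (fderiv ℝ f) x e e) 0 := by
    have := (ContinuousLinearMap.apply ℝ ℝ e).hasFDerivAt.comp_hasDerivAt 0 hcomp
    exact this
  rw [happ.deriv, iteratedFDeriv_two_apply]
  simp

lemma contDiff_line (x e : E2) : ContDiff ℝ 2 (fun r : ℝ => x + r • e) :=
  contDiff_const.add (contDiff_id.smul contDiff_const)

lemma contDiff_deriv_one {f : ℝ → ℝ} (hf : ContDiff ℝ 2 f) : ContDiff ℝ 1 (deriv f) := by
  have h21 : (2 : WithTop ℕ∞) = 1 + 1 := by norm_num
  rw [h21] at hf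
  exact (contDiff_succ_iff_deriv.1 hf).2.2

lemma deriv2_sub {f g : ℝ → ℝ} (hf : ContDiff ℝ 2 f) (hg : ContDiff ℝ 2 g) :
    deriv (deriv (fun r => f r - g r)) 0 = deriv (deriv f) 0 - deriv (deriv g) 0 := by
  have h1 : deriv (fun r => f r - g r) = fun r => deriv f r - deriv g r := by
    funext r
    exact deriv_sub (hf.differentiable two_ne_zero r) (hg.differentiable two_ne_zero r)
  rw [h1]
  exact deriv_sub ((contDiff_deriv_one hf).differentiable one_ne_zero 0)
    ((contDiff_deriv_one hg).differentiable one_ne_zero 0)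

lemma lap_le_lap {u v : E2 → ℝ} (hu : ContDiff ℝ 2 u) (hv : ContDiff ℝ 2 v)
    (x : E2) (hle : ∀ᶠ y in nhds x, u y ≤ v y) (heq : u x = v x) :
    lap u x ≤ lap v x := by
  apply Finset.sum_le_sum
  intro i _
  set e := EuclideanSpace.single i (1:ℝ) with he
  rw [line_second hu x e, line_second hv x e]
  set gu := fun r : ℝ => u (x + r • e) with hgu
  set gv := fun r : ℝ => v (x + r • e) with hgv
  have hcu : ContDiff ℝ 2 gu := hu.comp (contDiff_line x e)
  have hcv : ContDiff ℝ 2 gv := hv.comp (contDiff_line x e)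
  have hmin : IsLocalMin (fun r => gv r - gu r) 0 := by
    have hcont : Continuous (fun r : ℝ => x + r • e) := by continuity
    have htend : Filter.Tendsto (fun r : ℝ => x + r • e) (nhds 0) (nhds x) := by
      have := hcont.tendsto 0
      simpa using this
    filter_upwards [htend.eventually hle] with r hr
    show gv 0 - gu 0 ≤ gv r - gu r
    have h0 : gv 0 - gu 0 = 0 := by simp [gu, gv, heq]
    rw [h0]
    simp only [gu, gv]
    linarith [hr]
  have h2 := second_deriv_nonneg (hcv.sub hcu) hmin
  have h3 := deriv2_sub hcv hcu
  rw [h3] at h2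
  linarith

/-! ### The explicit comparison functions and their Laplacians -/

noncomputable def Mq (c : ℝ) (x : E2) : ℝ := x 0 / Real.sqrt 2 + (c * (x 1)^2 + 1/(8*c))
noncomputable def Lp (σ : ℝ) (x : E2) : ℝ := (x 0 + σ * x 1) / Real.sqrt 2

lemma contDiff_proj (i : Fin 2) (n : WithTop ℕ∞) : ContDiff ℝ n (fun x : E2 => x i) :=
  (EuclideanSpace.proj i : E2 →L[ℝ] ℝ).contDiff

lemma contDiff_Mq (c : ℝ) : ContDiff ℝ 2 (Mq c) := by
  unfold Mq
  exact ((contDiff_proj 0 2).div_const _).add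
    ((contDiff_const.mul ((contDiff_proj 1 2).pow 2)).add contDiff_const)

lemma contDiff_Lp (σ : ℝ) : ContDiff ℝ 2 (Lp σ) := by
  unfold Lp
  exact ((contDiff_proj 0 2).add (contDiff_const.mul (contDiff_proj 1 2))).div_const _

lemma single_line (x : E2) (i j : Fin 2) (r : ℝ) :
    (x + r • EuclideanSpace.single i (1:ℝ)) j = x j + (if j = i then r else 0) := by
  simp only [PiLp.add_apply, PiLp.smul_apply, EuclideanSpace.single_apply, smul_eq_mul]
  split_ifs <;> ring

lemma lap_Mq {c : ℝ} (hc : 0 < c) (x : E2) : lap (Mq c) x = 2 * c := by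
  unfold lap
  rw [Fin.sum_univ_two, line_second (contDiff_Mq c) x _, line_second (contDiff_Mq c) x _]
  have e0 : (fun r : ℝ => Mq c (x + r • EuclideanSpace.single (0:Fin 2) (1:ℝ)))
      = fun r : ℝ => (x 0 + r) / Real.sqrt 2 + (c * (x 1)^2 + 1/(8*c)) := by
    funext r
    rw [Mq, single_line, single_line]
    norm_num
  have e1 : (fun r : ℝ => Mq c (x + r • EuclideanSpace.single (1:Fin 2) (1:ℝ)))
      = fun r : ℝ => x 0 / Real.sqrt 2 + (c * (x 1 + r)^2 + 1/(8*c)) := by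
    funext r
    rw [Mq, single_line, single_line]
    norm_num
  rw [e0, e1]
  have d0 : deriv (fun r : ℝ => (x 0 + r) / Real.sqrt 2 + (c * (x 1)^2 + 1/(8*c)))
      = fun _ : ℝ => 1 / Real.sqrt 2 := by
    funext r
    exact (((hasDerivAt_id r).const_add (x 0)).div_const (Real.sqrt 2) |>.add_const _).deriv
  have d1 : deriv (fun r : ℝ => x 0 / Real.sqrt 2 + (c * (x 1 + r)^2 + 1/(8*c)))
      = fun r : ℝ => 2 * c * (x 1 + r) := by
    funext r
    have h1 : HasDerivAt (fun r : ℝ => c * (x 1 + r)^2 + 1/(8*c)) (2*c*(x 1 + r)) r := by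
      have := (hasDerivAt_quad c (1/(8*c)) (x 1 + r)).comp r ((hasDerivAt_id r).const_add (x 1))
      simpa [Function.comp_def] using this
    exact (h1.const_add (x 0 / Real.sqrt 2)).deriv
  rw [d0, d1, deriv_const]
  have : HasDerivAt (fun r : ℝ => 2 * c * (x 1 + r)) (2*c) 0 := by
    simpa using ((hasDerivAt_id (0:ℝ)).const_add (x 1)).const_mul (2*c)
  rw [this.deriv]
  ring

lemma lap_Lp (σ : ℝ) (x : E2) : lap (Lp σ) x = 0 := by
  unfold lap
  rw [Fin.sum_univ_two, line_second (contDiff_Lp σ) x _, line_second (contDiff_Lp σ) x _]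
  have e0 : (fun r : ℝ => Lp σ (x + r • EuclideanSpace.single (0:Fin 2) (1:ℝ)))
      = fun r : ℝ => (x 0 + r + σ * x 1) / Real.sqrt 2 := by
    funext r
    rw [Lp, single_line, single_line]
    norm_num
  have e1 : (fun r : ℝ => Lp σ (x + r • EuclideanSpace.single (1:Fin 2) (1:ℝ)))
      = fun r : ℝ => (x 0 + σ * (x 1 + r)) / Real.sqrt 2 := by
    funext r
    rw [Lp, single_line, single_line]
    norm_num
  rw [e0, e1]
  have d0 : deriv (fun r : ℝ => (x 0 + r + σ * x 1) / Real.sqrt 2)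
      = fun _ : ℝ => 1 / Real.sqrt 2 := by
    funext r
    have h : HasDerivAt (fun r : ℝ => x 0 + r + σ * x 1) 1 r := by
      simpa using ((hasDerivAt_id r).const_add (x 0)).add_const (σ * x 1)
    exact (h.div_const _).deriv
  have d1 : deriv (fun r : ℝ => (x 0 + σ * (x 1 + r)) / Real.sqrt 2)
      = fun _ : ℝ => σ / Real.sqrt 2 := by
    funext r
    have h : HasDerivAt (fun r : ℝ => x 0 + σ * (x 1 + r)) σ r := by
      simpa using (((hasDerivAt_id r).const_add (x 1)).const_mul σ).const_add (x 0)
    exact (h.div_const _).deriv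
  rw [d0, d1, deriv_const, deriv_const]
  ring

/-! ### Relations between eta, psi, rho, Mq, Lp -/

lemma eta_psi (c : ℝ) (x : E2) : eta c x = x 0 / Real.sqrt 2 + psi c (x 1) := by
  rw [eta, psi, aa]
  split_ifs with h
  · ring
  · rw [add_div]

lemma psi_ge {c : ℝ} (hc : 0 < c) (s : ℝ) : |s| / Real.sqrt 2 ≤ psi c s := by
  rw [psi]
  split_ifs with h
  · exact key_abs hc s
  · exact le_rfl

lemma psi_le_quad {c : ℝ} (hc : 0 < c) (s : ℝ) : psi c s ≤ c * s^2 + 1/(8*c) := by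
  rw [psi]
  split_ifs with h
  · exact le_rfl
  · exact key_abs hc s

lemma psi_eq_abs {c : ℝ} (hc : 0 < c) {s : ℝ} (h : aa c ≤ |s|) :
    psi c s = |s| / Real.sqrt 2 := by
  rcases le_or_gt 0 s with hs | hs
  · rw [abs_of_nonneg hs] at h ⊢
    exact psi_eq_lin_pos hc h
  · rw [abs_of_neg hs] at h ⊢
    exact psi_eq_lin_neg hc (by linarith)

lemma rho_le_eta {c : ℝ} (hc : 0 < c) (x : E2) : rhoObst2 x ≤ eta c x := by
  rw [eta_psi, rhoObst2, add_div]
  exact add_le_add_right (psi_ge hc (x 1)) _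

lemma eta_le_Mq {c : ℝ} (hc : 0 < c) (x : E2) : eta c x ≤ Mq c x := by
  rw [eta_psi, Mq]
  exact add_le_add_right (psi_le_quad hc (x 1)) _

lemma eta_eq_Mq {c : ℝ} {x : E2} (h : |x 1| ≤ aa c) : eta c x = Mq c x := by
  rw [eta_psi, Mq, psi_eq_quad h]

lemma eta_eq_rho {c : ℝ} (hc : 0 < c) {x : E2} (h : aa c ≤ |x 1|) :
    eta c x = rhoObst2 x := by
  rw [eta_psi, psi_eq_abs hc h, rhoObst2, add_div]

end EtaAux


/-- Explicit solution of the two-dimensional auxiliary obstacle problem. -/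
theorem eta_is_solution (c : ℝ) (hc : 0 < c) :
    ContDiff ℝ 1 (eta c) ∧ IsVSol c rhoObst2 Set.univ (eta c) := by
  open EtaAux in
  refine ⟨?_, ?_, ?_, ?_⟩
  · -- C¹ regularity
    have heq : eta c = fun x : EtaAux.E2 => x 0 / Real.sqrt 2 + EtaAux.psi c (x 1) :=
      funext (EtaAux.eta_psi c)
    rw [heq]
    exact ((EtaAux.contDiff_proj 0 1).div_const _).add
      ((EtaAux.contDiff_psi hc).comp (EtaAux.contDiff_proj 1 1))
  · -- subsolution
    intro x₀ _ hlt φ hφ hval hev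
    have hx : |x₀ 1| < EtaAux.aa c := by
      by_contra hge
      push_neg at hge
      rw [EtaAux.eta_eq_rho hc hge] at hlt
      exact lt_irrefl _ hlt
    have hopen : IsOpen {y : EtaAux.E2 | |y 1| < EtaAux.aa c} :=
      isOpen_lt ((EtaAux.contDiff_proj 1 1).continuous.abs) continuous_const
    have hevq : ∀ᶠ y in nhds x₀, eta c y = EtaAux.Mq c y := by
      filter_upwards [hopen.mem_nhds hx] with y hy
      exact EtaAux.eta_eq_Mq hy.le
    have hM : ∀ᶠ y in nhds x₀, EtaAux.Mq c y ≤ φ y := by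
      filter_upwards [hevq, hev] with y h1 h2
      rw [← h1]; exact h2
    have heqM : EtaAux.Mq c x₀ = φ x₀ := by
      rw [← EtaAux.eta_eq_Mq hx.le, hval]
    have hcomp := EtaAux.lap_le_lap (EtaAux.contDiff_Mq c) hφ x₀ hM heqM
    rw [EtaAux.lap_Mq hc] at hcomp
    linarith
  · -- supersolution: obstacle constraint
    intro x _
    exact EtaAux.rho_le_eta hc x
  · -- supersolution: PDE inequality
    intro x₀ _ φ hφ hval hev
    by_cases h1 : |x₀ 1| ≤ EtaAux.aa c
    · have hM : ∀ᶠ y in nhds x₀, φ y ≤ EtaAux.Mq c y :=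
        hev.mono (fun y hy => hy.trans (EtaAux.eta_le_Mq hc y))
      have heqM : φ x₀ = EtaAux.Mq c x₀ := by rw [hval, EtaAux.eta_eq_Mq h1]
      have hcomp := EtaAux.lap_le_lap hφ (EtaAux.contDiff_Mq c) x₀ hM heqM
      rw [EtaAux.lap_Mq hc] at hcomp
      linarith
    · push_neg at h1
      have ha := EtaAux.aa_pos hc
      rcases lt_or_ge 0 (x₀ 1) with hs | hs
      · -- positive side
        have hgt : EtaAux.aa c < x₀ 1 := by rwa [abs_of_pos hs] at h1
        have hopen : IsOpen {y : EtaAux.E2 | EtaAux.aa c < y 1} :=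
          isOpen_lt continuous_const (EtaAux.contDiff_proj 1 1).continuous
        have hevl : ∀ᶠ y in nhds x₀, eta c y = EtaAux.Lp 1 y := by
          filter_upwards [hopen.mem_nhds hgt] with y hy
          have hy0 : 0 < y 1 := lt_trans ha hy
          rw [EtaAux.eta_eq_rho hc (by rw [abs_of_pos hy0]; exact hy.le), rhoObst2,
            EtaAux.Lp, abs_of_pos hy0, one_mul]
        have hM : ∀ᶠ y in nhds x₀, φ y ≤ EtaAux.Lp 1 y := by
          filter_upwards [hevl, hev] with y hy1 hy2
          rw [← hy1]; exact hy2
        have heqL : φ x₀ = EtaAux.Lp 1 x₀ := by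
          rw [hval]
          have hy0 : 0 < x₀ 1 := hs
          rw [EtaAux.eta_eq_rho hc (by rw [abs_of_pos hy0]; exact hgt.le), rhoObst2,
            EtaAux.Lp, abs_of_pos hy0, one_mul]
        have hcomp := EtaAux.lap_le_lap hφ (EtaAux.contDiff_Lp 1) x₀ hM heqL
        rw [EtaAux.lap_Lp] at hcomp
        linarith
      · -- negative side
        have hs' : x₀ 1 < 0 := by
          rcases hs.lt_or_eq with h' | h'
          · exact h'
          · rw [h'] at h1; simp at h1; linarith
        have hgt : x₀ 1 < -EtaAux.aa c := by rw [abs_of_neg hs'] at h1; linarith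
        have hopen : IsOpen {y : EtaAux.E2 | y 1 < -EtaAux.aa c} :=
          isOpen_lt (EtaAux.contDiff_proj 1 1).continuous continuous_const
        have hevl : ∀ᶠ y in nhds x₀, eta c y = EtaAux.Lp (-1) y := by
          filter_upwards [hopen.mem_nhds hgt] with y hy
          have hy0 : y 1 < 0 := lt_trans hy (by linarith)
          rw [EtaAux.eta_eq_rho hc (by rw [abs_of_neg hy0]; linarith), rhoObst2,
            EtaAux.Lp, abs_of_neg hy0]
          ring_nf
        have hM : ∀ᶠ y in nhds x₀, φ y ≤ EtaAux.Lp (-1) y := by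
          filter_upwards [hevl, hev] with y hy1 hy2
          rw [← hy1]; exact hy2
        have heqL : φ x₀ = EtaAux.Lp (-1) x₀ := by
          rw [hval, EtaAux.eta_eq_rho hc (by rw [abs_of_neg hs']; linarith), rhoObst2,
            EtaAux.Lp, abs_of_neg hs']
          ring_nf
        have hcomp := EtaAux.lap_le_lap hφ (EtaAux.contDiff_Lp (-1)) x₀ hM heqL
        rw [EtaAux.lap_Lp] at hcomp
        linarith
end

section
/- Integral inequality for the mollifier profile: Let μ(R) = exp(−1/(1 − R²)) for 0 ≤ R < 1 and μ(R) = 0 for R ≥ 1. There exists a constant C > 0, independent of d, such that for every integer d ≥ 2, ∫₀¹ |μ'(R)|·R^{d−1} dR ≤ C·(d − 1)·∫₀¹ μ(R)·R^{d−1} dR. -/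
noncomputable def mollProfile (R : ℝ) : ℝ :=
  if R < 1 then Real.exp (-1 / (1 - R ^ 2)) else 0

/-- The pointwise derivative of `mollProfile`. -/
noncomputable def mollD (R : ℝ) : ℝ :=
  if R < 1 then Real.exp (-1 / (1 - R ^ 2)) * (-2 * R / (1 - R ^ 2) ^ 2) else 0

lemma moll_nonneg (R : ℝ) : 0 ≤ mollProfile R := by
  unfold mollProfile; split
  · positivity
  · exact le_rfl

lemma moll_one : mollProfile 1 = 0 := by simp [mollProfile]

lemma mollD_one : mollD 1 = 0 := by simp [mollD]

lemma exp_neg_le_sq {t : ℝ} (ht : 0 < t) : Real.exp (-t) ≤ 4 / t ^ 2 := by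
  have h1 : t / 2 + 1 ≤ Real.exp (t / 2) := Real.add_one_le_exp (t / 2)
  have h2 : Real.exp (t / 2) * Real.exp (t / 2) = Real.exp t := by
    rw [← Real.exp_add]; ring_nf
  have h3 : t ^ 2 / 4 ≤ Real.exp t := by nlinarith [ht.le, Real.exp_pos (t / 2)]
  have h4 : (Real.exp t)⁻¹ ≤ (t ^ 2 / 4)⁻¹ :=
    inv_anti₀ (by positivity) h3
  rw [Real.exp_neg]
  calc (Real.exp t)⁻¹ ≤ (t ^ 2 / 4)⁻¹ := h4
    _ = 4 / t ^ 2 := by rw [inv_div]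

lemma exp_neg_le_cube {t : ℝ} (ht : 0 < t) : Real.exp (-t) ≤ 27 / t ^ 3 := by
  have h1 : t / 3 + 1 ≤ Real.exp (t / 3) := Real.add_one_le_exp (t / 3)
  have h2 : Real.exp (t / 3) * Real.exp (t / 3) * Real.exp (t / 3) = Real.exp t := by
    rw [← Real.exp_add, ← Real.exp_add]; ring_nf
  have h5 : (t / 3 + 1) ^ 3 ≤ Real.exp (t / 3) ^ 3 :=
    pow_le_pow_left₀ (by positivity) h1 3
  have h6 : Real.exp (t / 3) ^ 3 = Real.exp t := by rw [← h2]; ring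
  have h3 : t ^ 3 / 27 ≤ Real.exp t := by nlinarith [ht.le, h5, h6]
  have h4 : (Real.exp t)⁻¹ ≤ (t ^ 3 / 27)⁻¹ :=
    inv_anti₀ (by positivity) h3
  rw [Real.exp_neg]
  calc (Real.exp t)⁻¹ ≤ (t ^ 3 / 27)⁻¹ := h4
    _ = 27 / t ^ 3 := by rw [inv_div]

/-- Derivative at points `0 ≤ R < 1`. -/
lemma moll_hasDerivAt_lt {R : ℝ} (h0 : 0 ≤ R) (h1 : R < 1) :
    HasDerivAt mollProfile (mollD R) R := by
  have hpos : 0 < 1 - R ^ 2 := by nlinarith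
  have hne : 1 - R ^ 2 ≠ 0 := ne_of_gt hpos
  have hb : HasDerivAt (fun x : ℝ => 1 - x ^ 2) (-(2 * R)) R := by
    simpa using (hasDerivAt_pow 2 R).const_sub 1
  have hinv : HasDerivAt (fun x : ℝ => (1 - x ^ 2)⁻¹)
      (-(-(2 * R)) / (1 - R ^ 2) ^ 2) R := hb.inv hne
  have hneg : HasDerivAt (fun x : ℝ => -(1 - x ^ 2)⁻¹)
      (-(-(-(2 * R)) / (1 - R ^ 2) ^ 2)) R := hinv.neg
  have hexp : HasDerivAt (fun x : ℝ => Real.exp (-(1 - x ^ 2)⁻¹))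
      (Real.exp (-(1 - R ^ 2)⁻¹) * -(-(-(2 * R)) / (1 - R ^ 2) ^ 2)) R := hneg.exp
  have heq : mollProfile =ᶠ[nhds R] fun x : ℝ => Real.exp (-(1 - x ^ 2)⁻¹) := by
    filter_upwards [Iio_mem_nhds h1] with x hx
    have hx' : x < 1 := hx
    simp [mollProfile, hx', neg_div, one_div]
  have := hexp.congr_of_eventuallyEq heq
  convert this using 1
  show mollD R = _; rw [mollD, if_pos h1]
  rw [neg_div, one_div]
  ring
  all_goals rfl

/-- Bound `mollProfile x ≤ 16 (x-1)^2` for `x ≥ 0`. -/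
lemma moll_sq_bound {x : ℝ} (h0 : 0 ≤ x) : |mollProfile x| ≤ 16 * (x - 1) ^ 2 := by
  rcases lt_or_ge x 1 with hx | hx
  · have hpos : 0 < 1 - x ^ 2 := by nlinarith
    have ht : 0 < (1 - x ^ 2)⁻¹ := by positivity
    have hb := exp_neg_le_sq ht
    have hval : mollProfile x = Real.exp (-(1 - x ^ 2)⁻¹) := by
      simp [mollProfile, if_pos hx, neg_div, one_div]
    rw [hval, abs_of_nonneg (Real.exp_pos _).le]
    have h4 : 4 / ((1 - x ^ 2)⁻¹) ^ 2 = 4 * (1 - x ^ 2) ^ 2 := by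
      field_simp
    rw [h4] at hb
    nlinarith [sq_nonneg (1 - x ^ 2), sq_nonneg (x - 1), sq_nonneg (1 + x)]
  · have : mollProfile x = 0 := by simp [mollProfile, not_lt.mpr hx]
    rw [this]; simp; positivity

/-- Derivative at `R = 1` is `0`. -/
lemma moll_hasDerivAt_one : HasDerivAt mollProfile 0 1 := by
  rw [hasDerivAt_iff_isLittleO]
  simp only [moll_one, smul_zero, sub_zero]
  have h1 : (fun x : ℝ => mollProfile x) =O[nhds 1] fun x => (x - 1) ^ 2 := by
    rw [Asymptotics.isBigO_iff]
    refine ⟨16, ?_⟩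
    filter_upwards [Ioi_mem_nhds (show (0 : ℝ) < 1 by norm_num)] with x hx
    have := moll_sq_bound (le_of_lt hx)
    calc ‖mollProfile x‖ = |mollProfile x| := rfl
      _ ≤ 16 * (x - 1) ^ 2 := this
      _ ≤ 16 * ‖(x - 1) ^ 2‖ := by
          rw [Real.norm_eq_abs, abs_of_nonneg (sq_nonneg _)]
  have h2 : (fun x : ℝ => (x - 1) ^ 2) =o[nhds 1] fun x => x - 1 := by
    have ho : (fun x : ℝ => x - 1) =o[nhds 1] (fun _ => (1 : ℝ)) := by
      rw [Asymptotics.isLittleO_one_iff]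
      have : Filter.Tendsto (fun x : ℝ => x - 1) (nhds 1) (nhds (1 - 1)) :=
        (continuous_id.sub continuous_const).tendsto 1
      simpa using this
    have := ho.mul_isBigO (Asymptotics.isBigO_refl (fun x : ℝ => x - 1) (nhds 1))
    simpa [sq] using this
  exact h1.trans_isLittleO h2

lemma moll_hasDerivAt {R : ℝ} (hR : R ∈ Set.Icc (0 : ℝ) 1) :
    HasDerivAt mollProfile (mollD R) R := by
  rcases lt_or_ge R 1 with h | h
  · exact moll_hasDerivAt_lt hR.1 h
  · have : R = 1 := le_antisymm hR.2 h
    subst this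
    simpa [mollD_one] using moll_hasDerivAt_one

lemma mollD_nonpos {R : ℝ} (h0 : 0 ≤ R) : mollD R ≤ 0 := by
  unfold mollD; split
  · have h1 : Real.exp (-1 / (1 - R ^ 2)) > 0 := Real.exp_pos _
    have : -2 * R / (1 - R ^ 2) ^ 2 ≤ 0 := by
      apply div_nonpos_of_nonpos_of_nonneg
      · linarith
      · positivity
    exact mul_nonpos_of_nonneg_of_nonpos h1.le this
  · exact le_rfl

/-- Bound for `mollD` on `[0,1)`. -/
lemma mollD_bound {R : ℝ} (h0 : 0 ≤ R) (h1 : R < 1) : |mollD R| ≤ 108 * (1 - R) := by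
  have hpos : 0 < 1 - R ^ 2 := by nlinarith
  have ht : 0 < (1 - R ^ 2)⁻¹ := by positivity
  have hb := exp_neg_le_cube ht
  have h27 : 27 / ((1 - R ^ 2)⁻¹) ^ 3 = 27 * (1 - R ^ 2) ^ 3 := by field_simp
  rw [h27] at hb
  have hval : mollD R = Real.exp (-(1 - R ^ 2)⁻¹) * (-2 * R / (1 - R ^ 2) ^ 2) := by
    rw [mollD, if_pos h1, neg_div, one_div]
  rw [hval, abs_mul, abs_of_nonneg (Real.exp_pos _).le]
  have habs : |(-2 * R / (1 - R ^ 2) ^ 2)| = 2 * R / (1 - R ^ 2) ^ 2 := by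
    rw [abs_div, abs_of_nonneg (by positivity : (0:ℝ) ≤ (1 - R ^ 2) ^ 2)]
    congr 1
    rw [abs_of_nonpos (by linarith : -2 * R ≤ 0)]
    ring
  rw [habs]
  have hm := mul_le_mul_of_nonneg_right hb (show (0:ℝ) ≤ 2 * R by linarith)
  have hfac : (0:ℝ) ≤ (1 - R ^ 2) ^ 2 * ((108 - 54 * R * (1 + R)) * (1 - R)) := by
    apply mul_nonneg (sq_nonneg _)
    apply mul_nonneg (by nlinarith) (by linarith)
  have key : Real.exp (-(1 - R ^ 2)⁻¹) * (2 * R) ≤ 108 * (1 - R) * (1 - R ^ 2) ^ 2 := by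
    nlinarith [hm, hfac]
  calc Real.exp (-(1 - R ^ 2)⁻¹) * (2 * R / (1 - R ^ 2) ^ 2)
      = Real.exp (-(1 - R ^ 2)⁻¹) * (2 * R) / (1 - R ^ 2) ^ 2 := by ring
    _ ≤ 108 * (1 - R) := by
        rw [div_le_iff₀ (by positivity : (0:ℝ) < (1 - R ^ 2) ^ 2)]
        exact key

lemma mollD_contOn : ContinuousOn mollD (Set.Icc (0 : ℝ) 1) := by
  intro x hx
  rcases lt_or_ge x 1 with h | h
  · apply ContinuousAt.continuousWithinAt
    have hne : 1 - x ^ 2 ≠ 0 := by nlinarith [hx.1]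
    have hψ : ContinuousAt
        (fun y : ℝ => Real.exp (-1 / (1 - y ^ 2)) * (-2 * y / (1 - y ^ 2) ^ 2)) x := by
      apply ContinuousAt.mul
      · exact Real.continuous_exp.continuousAt.comp
          (ContinuousAt.div continuousAt_const (by fun_prop) hne)
      · exact ContinuousAt.div (by fun_prop) (by fun_prop) (pow_ne_zero 2 hne)
    apply hψ.congr
    filter_upwards [Iio_mem_nhds h] with y hy
    rw [mollD, if_pos (show y < 1 from hy)]
  · have hx1 : x = 1 := le_antisymm hx.2 h
    subst hx1
    unfold ContinuousWithinAt
    rw [mollD_one]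
    apply squeeze_zero_norm' (a := fun y : ℝ => 108 * (1 - y))
    · filter_upwards [self_mem_nhdsWithin] with y hy
      rcases lt_or_ge y 1 with h' | h'
      · exact mollD_bound hy.1 h'
      · have : y = 1 := le_antisymm hy.2 h'
        subst this
        simp [mollD_one]
    · have : Filter.Tendsto (fun y : ℝ => 108 * (1 - y)) (nhds 1) (nhds (108 * (1 - 1))) :=
        (continuous_const.mul (continuous_const.sub continuous_id)).tendsto 1
      simpa using this.mono_left nhdsWithin_le_nhds

lemma moll_contOn : ContinuousOn mollProfile (Set.Icc (0 : ℝ) 1) :=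
  fun x hx => (moll_hasDerivAt hx).continuousAt.continuousWithinAt

lemma moll_le_one {R : ℝ} (h0 : 0 ≤ R) : mollProfile R ≤ 1 := by
  unfold mollProfile; split
  · rename_i h
    have hpos : 0 < 1 - R ^ 2 := by nlinarith
    calc Real.exp (-1 / (1 - R ^ 2)) ≤ Real.exp 0 := by
          apply Real.exp_le_exp.mpr
          apply div_nonpos_of_nonpos_of_nonneg <;> linarith
      _ = 1 := Real.exp_zero
  · norm_num

lemma moll_ge {R : ℝ} (h1 : 1 / 2 ≤ R) (h2 : R ≤ 3 / 4) :
    Real.exp (-3) ≤ mollProfile R := by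
  have hR1 : R < 1 := by linarith
  rw [mollProfile, if_pos hR1]
  apply Real.exp_le_exp.mpr
  have hpos : 0 < 1 - R ^ 2 := by nlinarith
  rw [neg_div, neg_le_neg_iff, div_le_iff₀ hpos]
  nlinarith

/-- Integral inequality for the mollifier profile. -/
theorem mollifier_profile_integral_inequality :
    ∃ C : ℝ, 0 < C ∧ ∀ d : ℕ, 2 ≤ d →
      (∫ R in (0 : ℝ)..1, |deriv mollProfile R| * R ^ (d - 1)) ≤
        C * ((d : ℝ) - 1) * ∫ R in (0 : ℝ)..1, mollProfile R * R ^ (d - 1) := by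
  refine ⟨2 + 4 * Real.exp 3, by positivity, ?_⟩
  intro d hd
  have hIcc : Set.uIcc (0 : ℝ) 1 = Set.Icc (0 : ℝ) 1 := Set.uIcc_of_le zero_le_one
  have hd2 : d - 2 + 1 = d - 1 := by omega
  have hcast : ((d - 1 : ℕ) : ℝ) = (d : ℝ) - 1 := by
    have : 1 ≤ d := by omega
    push_cast [Nat.cast_sub this]; ring
  -- integrability
  have hintD : IntervalIntegrable mollD MeasureTheory.volume 0 1 := by
    apply ContinuousOn.intervalIntegrable
    rw [hIcc]; exact mollD_contOn
  have hcontM : ContinuousOn mollProfile (Set.uIcc (0:ℝ) 1) := by rw [hIcc]; exact moll_contOn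
  have hint1 : ∀ k : ℕ, IntervalIntegrable (fun R => mollProfile R * R ^ k)
      MeasureTheory.volume 0 1 := fun k => by
    apply ContinuousOn.intervalIntegrable
    exact hcontM.mul (by fun_prop)
  -- integration by parts
  have hderiv_pow : ∀ x ∈ Set.uIcc (0:ℝ) 1,
      HasDerivAt (fun y : ℝ => y ^ (d - 1)) (((d - 1 : ℕ) : ℝ) * x ^ (d - 2)) x := by
    intro x _
    have := hasDerivAt_pow (d - 1) x
    have h' : d - 1 - 1 = d - 2 := by omega
    rwa [h'] at this
  have hibp := intervalIntegral.integral_mul_deriv_eq_deriv_mul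
    (u := mollProfile) (u' := mollD) (v := fun y : ℝ => y ^ (d - 1))
    (v' := fun x : ℝ => ((d - 1 : ℕ) : ℝ) * x ^ (d - 2))
    (fun x hx => moll_hasDerivAt (hIcc ▸ hx)) hderiv_pow hintD
    (by apply ContinuousOn.intervalIntegrable; fun_prop)
  have hzero : mollProfile 1 * (1:ℝ) ^ (d-1) - mollProfile 0 * (0:ℝ) ^ (d-1) = 0 := by
    rw [moll_one, zero_pow (show d - 1 ≠ 0 by omega)]
    ring
  rw [hzero] at hibp
  -- rewrite LHS of hibp
  have hlhs : (∫ x in (0:ℝ)..1, mollProfile x * (((d - 1 : ℕ) : ℝ) * x ^ (d - 2)))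
      = ((d : ℝ) - 1) * ∫ x in (0:ℝ)..1, mollProfile x * x ^ (d - 2) := by
    rw [← intervalIntegral.integral_const_mul]
    congr 1
    ext x
    rw [hcast]; ring
  rw [hlhs] at hibp
  -- so ∫ mollD x * x^(d-1) = -((d:ℝ)-1) * ∫ mollProfile x * x^(d-2)
  have hibp' : (∫ x in (0:ℝ)..1, mollD x * x ^ (d - 1))
      = -(((d : ℝ) - 1) * ∫ x in (0:ℝ)..1, mollProfile x * x ^ (d - 2)) := by
    linarith [hibp]
  -- LHS equals -(∫ mollD x * x^(d-1))
  have hLHS : (∫ R in (0 : ℝ)..1, |deriv mollProfile R| * R ^ (d - 1))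
      = ((d : ℝ) - 1) * ∫ x in (0:ℝ)..1, mollProfile x * x ^ (d - 2) := by
    have hcongr : ∀ R ∈ Set.uIcc (0:ℝ) 1,
        |deriv mollProfile R| * R ^ (d - 1) = -(mollD R * R ^ (d - 1)) := by
      intro R hR
      rw [hIcc] at hR
      rw [(moll_hasDerivAt hR).deriv, abs_of_nonpos (mollD_nonpos hR.1)]
      ring
    rw [intervalIntegral.integral_congr (g := fun R => -(mollD R * R ^ (d - 1)))
      (fun R hR => hcongr R hR), intervalIntegral.integral_neg, hibp']
    ring
  rw [hLHS]
  -- comparison of integrals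
  set I1 : ℝ := ∫ x in (0:ℝ)..1, mollProfile x * x ^ (d - 1) with hI1
  set I2 : ℝ := ∫ x in (0:ℝ)..1, mollProfile x * x ^ (d - 2) with hI2
  have hint_sub : ∀ (k : ℕ) (a b : ℝ), 0 ≤ a → a ≤ b → b ≤ 1 →
      IntervalIntegrable (fun R => mollProfile R * R ^ k) MeasureTheory.volume a b := by
    intro k a b ha hab hb
    apply ContinuousOn.intervalIntegrable
    apply (moll_contOn.mul (by fun_prop)).mono
    rw [Set.uIcc_of_le hab]
    exact Set.Icc_subset_Icc ha hb
  have hnn : ∀ (k : ℕ) (a b : ℝ), 0 ≤ a → a ≤ b →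
      (0:ℝ) ≤ ∫ x in a..b, mollProfile x * x ^ k := by
    intro k a b ha hab
    apply intervalIntegral.integral_nonneg hab
    intro u hu
    exact mul_nonneg (moll_nonneg u) (pow_nonneg (le_trans ha hu.1) k)
  have hsplit2 : I2 = (∫ x in (0:ℝ)..(1/2), mollProfile x * x ^ (d - 2)) +
      ∫ x in (1/2:ℝ)..1, mollProfile x * x ^ (d - 2) :=
    (intervalIntegral.integral_add_adjacent_intervals
      (hint_sub _ 0 (1/2) le_rfl (by norm_num) (by norm_num))
      (hint_sub _ (1/2) 1 (by norm_num) (by norm_num) le_rfl)).symm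
  have hsplit1 : I1 = (∫ x in (0:ℝ)..(1/2), mollProfile x * x ^ (d - 1)) +
      ∫ x in (1/2:ℝ)..1, mollProfile x * x ^ (d - 1) :=
    (intervalIntegral.integral_add_adjacent_intervals
      (hint_sub _ 0 (1/2) le_rfl (by norm_num) (by norm_num))
      (hint_sub _ (1/2) 1 (by norm_num) (by norm_num) le_rfl)).symm
  have hsplit1' : (∫ x in (1/2:ℝ)..1, mollProfile x * x ^ (d - 1)) =
      (∫ x in (1/2:ℝ)..(3/4), mollProfile x * x ^ (d - 1)) +
      ∫ x in (3/4:ℝ)..1, mollProfile x * x ^ (d - 1) :=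
    (intervalIntegral.integral_add_adjacent_intervals
      (hint_sub _ (1/2) (3/4) (by norm_num) (by norm_num) (by norm_num))
      (hint_sub _ (3/4) 1 (by norm_num) (by norm_num) le_rfl)).symm
  -- piece A : small radii
  have hA : (∫ x in (0:ℝ)..(1/2), mollProfile x * x ^ (d - 2)) ≤ (1/2:ℝ) ^ (d - 1) := by
    have hmono : (∫ x in (0:ℝ)..(1/2), mollProfile x * x ^ (d - 2)) ≤
        ∫ x in (0:ℝ)..(1/2), x ^ (d - 2) := by
      apply intervalIntegral.integral_mono_on (by norm_num)
        (hint_sub _ 0 (1/2) le_rfl (by norm_num) (by norm_num))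
        (by apply ContinuousOn.intervalIntegrable; fun_prop)
      intro x hx
      calc mollProfile x * x ^ (d - 2) ≤ 1 * x ^ (d - 2) :=
            mul_le_mul_of_nonneg_right (moll_le_one hx.1) (pow_nonneg hx.1 _)
        _ = x ^ (d - 2) := one_mul _
    have hpow : (∫ x in (0:ℝ)..(1/2), x ^ (d - 2)) =
        ((1/2:ℝ)) ^ (d - 2 + 1) / ((d - 2 : ℕ) + 1) := by
      rw [integral_pow]
      rw [zero_pow (by omega : d - 2 + 1 ≠ 0)]
      ring
    have hle : ((1/2:ℝ)) ^ (d - 2 + 1) / ((d - 2 : ℕ) + 1) ≤ ((1/2:ℝ)) ^ (d - 2 + 1) := by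
      apply div_le_self (by positivity)
      have : (0:ℝ) ≤ ((d - 2 : ℕ) : ℝ) := Nat.cast_nonneg _
      linarith
    calc (∫ x in (0:ℝ)..(1/2), mollProfile x * x ^ (d - 2))
        ≤ ∫ x in (0:ℝ)..(1/2), x ^ (d - 2) := hmono
      _ = ((1/2:ℝ)) ^ (d - 2 + 1) / ((d - 2 : ℕ) + 1) := hpow
      _ ≤ ((1/2:ℝ)) ^ (d - 2 + 1) := hle
      _ = (1/2:ℝ) ^ (d - 1) := by rw [hd2]
  -- piece B : large radii
  have hB : (∫ x in (1/2:ℝ)..1, mollProfile x * x ^ (d - 2)) ≤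
      2 * ∫ x in (1/2:ℝ)..1, mollProfile x * x ^ (d - 1) := by
    rw [← intervalIntegral.integral_const_mul]
    apply intervalIntegral.integral_mono_on (by norm_num)
      (hint_sub _ (1/2) 1 (by norm_num) (by norm_num) le_rfl)
      ((hint_sub _ (1/2) 1 (by norm_num) (by norm_num) le_rfl).const_mul 2)
    intro x hx
    have h0 : (0:ℝ) ≤ x := by linarith [hx.1]
    have hp : x ^ (d - 1) = x ^ (d - 2) * x := by rw [← pow_succ, hd2]
    rw [hp]
    nlinarith [mul_nonneg (mul_nonneg (moll_nonneg x) (pow_nonneg h0 (d - 2)))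
      (show (0:ℝ) ≤ 2 * x - 1 by linarith [hx.1])]
  have hBI1 : (∫ x in (1/2:ℝ)..1, mollProfile x * x ^ (d - 1)) ≤ I1 := by
    rw [hsplit1]
    linarith [hnn (d - 1) 0 (1/2) le_rfl (by norm_num)]
  -- lower bound for I1
  have hmid : (1/4:ℝ) * Real.exp (-3) * (1/2:ℝ) ^ (d - 1) ≤
      ∫ x in (1/2:ℝ)..(3/4), mollProfile x * x ^ (d - 1) := by
    have hconst : (∫ _x in (1/2:ℝ)..(3/4), Real.exp (-3) * (1/2:ℝ) ^ (d - 1)) =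
        (1/4:ℝ) * Real.exp (-3) * (1/2:ℝ) ^ (d - 1) := by
      rw [intervalIntegral.integral_const]
      rw [smul_eq_mul]
      ring_nf
    rw [← hconst]
    apply intervalIntegral.integral_mono_on (by norm_num)
      intervalIntegrable_const
      (hint_sub _ (1/2) (3/4) (by norm_num) (by norm_num) (by norm_num))
    intro x hx
    exact mul_le_mul (moll_ge hx.1 hx.2)
      (pow_le_pow_left₀ (by norm_num) hx.1 _) (by positivity) (moll_nonneg x)
  have hmidI1 : (∫ x in (1/2:ℝ)..(3/4), mollProfile x * x ^ (d - 1)) ≤ I1 := by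
    rw [hsplit1, hsplit1']
    linarith [hnn (d - 1) 0 (1/2) le_rfl (by norm_num),
      hnn (d - 1) (3/4) 1 (by norm_num) (by norm_num)]
  have hkey : (1/4:ℝ) * Real.exp (-3) * (1/2:ℝ) ^ (d - 1) ≤ I1 := le_trans hmid hmidI1
  have he : Real.exp (-3) * Real.exp 3 = 1 := by rw [← Real.exp_add]; norm_num
  have hlow : (1/2:ℝ) ^ (d - 1) ≤ 4 * Real.exp 3 * I1 := by
    have hml := mul_le_mul_of_nonneg_left hkey
      (show (0:ℝ) ≤ 4 * Real.exp 3 by positivity)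
    calc (1/2:ℝ) ^ (d - 1)
        = 4 * Real.exp 3 * ((1/4:ℝ) * Real.exp (-3) * (1/2:ℝ) ^ (d - 1)) := by
          rw [show (4:ℝ) * Real.exp 3 * ((1/4:ℝ) * Real.exp (-3) * (1/2:ℝ) ^ (d - 1))
            = (Real.exp (-3) * Real.exp 3) * (1/2:ℝ) ^ (d - 1) by ring, he, one_mul]
      _ ≤ 4 * Real.exp 3 * I1 := hml
  -- combine
  have hcomp : I2 ≤ (2 + 4 * Real.exp 3) * I1 := by
    rw [hsplit2]
    nlinarith [hA, hB, hBI1, hlow]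
  have hdpos : (0:ℝ) ≤ (d:ℝ) - 1 := by
    have : (2:ℝ) ≤ (d:ℝ) := by exact_mod_cast hd
    linarith
  calc ((d:ℝ) - 1) * I2 ≤ ((d:ℝ) - 1) * ((2 + 4 * Real.exp 3) * I1) :=
        mul_le_mul_of_nonneg_left hcomp hdpos
    _ = (2 + 4 * Real.exp 3) * ((d:ℝ) - 1) * I1 := by ring
end
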